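/- Let n ≥ 3 and ℓ ≥ 0 be integers, and consider the factor P_{ℓ+1} P_{ℓ+2} ⋯ P_{ℓ+2^n} of the regular paperfolding word P, split into 2^{n−1} consecutive blocks of length 2. For 1 ≤ i ≤ 2^{n−1}, let c_i = P_{ℓ+2i−1} + P_{ℓ+2i} be the number of 1's in the i-th block. If 1 ≤ q ≤ 2^{n−1} is such that the sequence (c_1, …, c_{2^{n−1}}) equals its cyclic shift by q, i.e., (c_1, …, c_{2^{n−1}}) = (c_{q+1}, …, c_{2^{n−1}}, c_1, …, c_q), then q = 2^{n−1}. -/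

import Mathlib

/-- The regular paperfolding word `P = P₁P₂⋯` (0/1-valued, as a natural number):
`P_i = 1` iff `i ≡ 3·2^{ν₂(i)} (mod 2^{ν₂(i)+2})`, where `ν₂` is the 2-adic
valuation. (The value at `i = 0` is irrelevant.) -/
def regularPF (i : ℕ) : ℕ :=
  if i % 2 ^ (padicValNat 2 i + 2) = 3 * 2 ^ (padicValNat 2 i) then 1 else 0

lemma PF_le_one (i : ℕ) : regularPF i ≤ 1 := by
  unfold regularPF; split <;> norm_num

lemma PF_odd (m : ℕ) : regularPF (2 * m + 1) = m % 2 := by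
  have h0 : padicValNat 2 (2 * m + 1) = 0 :=
    padicValNat.eq_zero_of_not_dvd (by omega)
  unfold regularPF
  rw [h0]
  norm_num
  split_ifs with h <;> omega

lemma PF_even (m : ℕ) (hm : m ≠ 0) : regularPF (2 * m) = regularPF m := by
  have h2 : padicValNat 2 (2 * m) = padicValNat 2 m + 1 := by
    rw [padicValNat.mul (by norm_num) hm, padicValNat.self one_lt_two]
    omega
  unfold regularPF
  rw [h2]
  have e1 : 2 ^ (padicValNat 2 m + 1 + 2) = 2 * 2 ^ (padicValNat 2 m + 2) := by ring
  have e2 : 3 * 2 ^ (padicValNat 2 m + 1) = 2 * (3 * 2 ^ (padicValNat 2 m)) := by ring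
  rw [e1, e2, Nat.mul_mod_mul_left]
  exact if_congr (by omega) rfl rfl


lemma exists_mul_mod (q N : ℕ) (hN : 0 < N) :
    ∃ a : ℕ, (a * q) % N = Nat.gcd q N % N := by
  have hb := Nat.gcd_eq_gcd_ab q N
  set x := Nat.gcdA q N with hxdef
  have hN' : (N : ℤ) ≠ 0 := by exact_mod_cast hN.ne'
  have hx : (0 : ℤ) ≤ x % N := Int.emod_nonneg x hN'
  refine ⟨(x % N).toNat, ?_⟩
  have key : (((x % N).toNat * q : ℕ) : ℤ) % N = ((Nat.gcd q N : ℕ) : ℤ) % N := by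
    push_cast
    rw [Int.toNat_of_nonneg hx]
    rw [hb, Int.add_mul_emod_self_left]
    conv_lhs => rw [Int.mul_emod, Int.emod_emod_of_dvd x dvd_rfl, ← Int.mul_emod]
    ring_nf
  have := key
  rw [← Int.natCast_mod, ← Int.natCast_mod] at this
  exact_mod_cast this

lemma iter_shift (N q : ℕ) (hN : 0 < N) (w : ℕ → ℕ)
    (h : ∀ i < N, w i = w ((i + q) % N)) :
    ∀ a, ∀ i < N, w i = w ((i + a * q) % N) := by
  intro a
  induction a with
  | zero => intro i hi; simp [Nat.mod_eq_of_lt hi]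
  | succ a ih =>
    intro i hi
    rw [ih i hi, h _ (Nat.mod_lt _ hN), Nat.mod_add_mod]
    congr 1
    ring

lemma letters : ∀ k, 2 ≤ k → ∀ m0 q, 1 ≤ m0 → 1 ≤ q → q < 2 ^ k →
    (∀ i < 2 ^ k, regularPF (m0 + i) = regularPF (m0 + (i + q) % 2 ^ k)) → False := by
  intro k
  induction k using Nat.strong_induction_on with
  | _ k ih =>
  intro hk m0 q hm0 hq1 hq2 h
  have hN : 0 < 2 ^ k := pow_pos (by norm_num) k
  have hN4 : 4 ≤ 2 ^ k := by
    calc (4 : ℕ) = 2 ^ 2 := by norm_num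
    _ ≤ 2 ^ k := Nat.pow_le_pow_right (by norm_num) hk
  obtain ⟨a, ha⟩ := exists_mul_mod q (2 ^ k) hN
  set g := Nat.gcd q (2 ^ k) with hgdef
  have hg : ∀ i < 2 ^ k, regularPF (m0 + i) = regularPF (m0 + (i + g) % 2 ^ k) := by
    intro i hi
    have e := iter_shift (2 ^ k) q hN (fun i => regularPF (m0 + i)) h a i hi
    have heq : (i + a * q) % 2 ^ k = (i + g) % 2 ^ k := by
      rw [Nat.add_mod, ha, ← Nat.add_mod]
    rw [heq] at e
    exact e
  have hgq : g ≤ q := Nat.le_of_dvd hq1 (Nat.gcd_dvd_left q (2 ^ k))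
  have hg1 : 0 < g := Nat.gcd_pos_of_pos_left _ hq1
  obtain ⟨t, htk, hgt⟩ := (Nat.dvd_prime_pow Nat.prime_two).mp (Nat.gcd_dvd_right q (2 ^ k))
  rw [← hgdef] at hgt
  rcases lt_or_ge t 2 with ht2 | ht2
  · -- g = 1 or g = 2 : window contains two equal consecutive odd letters
    have hg12 : g = 1 ∨ g = 2 := by
      interval_cases t
      · left; simpa using hgt
      · right; simpa using hgt
    obtain ⟨s, hs⟩ : ∃ s, m0 + (m0 + 1) % 2 = 2 * s + 1 := ⟨m0 / 2, by omega⟩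
    set i0 := (m0 + 1) % 2 with hi0def
    have hi0 : i0 < 2 := Nat.mod_lt _ (by norm_num)
    have key : regularPF (m0 + i0) = regularPF (m0 + (i0 + 2)) := by
      rcases hg12 with h1 | h2
      · have e1 := hg i0 (by omega)
        have e2 := hg (i0 + 1) (by omega)
        rw [h1, Nat.mod_eq_of_lt (by omega)] at e1
        rw [h1, Nat.mod_eq_of_lt (by omega)] at e2
        rw [show i0 + 1 + 1 = i0 + 2 by omega] at e2
        exact e1.trans e2
      · have e1 := hg i0 (by omega)
        rw [h2, Nat.mod_eq_of_lt (by omega)] at e1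
        exact e1
    rw [show m0 + i0 = 2 * s + 1 from hs,
        show m0 + (i0 + 2) = 2 * (s + 1) + 1 by omega, PF_odd, PF_odd] at key
    omega
  · -- g = 2^t with t ≥ 2 : descend to the even positions
    have htklt : t < k := by
      by_contra hc
      push_neg at hc
      have : 2 ^ k ≤ 2 ^ t := Nat.pow_le_pow_right (by norm_num) hc
      omega
    have hk3 : 3 ≤ k := by omega
    set m1 := (m0 + 1) / 2 with hm1def
    set q' := 2 ^ (t - 1) with hq'def
    have hgq' : g = 2 * q' := by
      rw [hgt, hq'def, ← pow_succ']
      congr 1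
      omega
    have hNN : 2 ^ k = 2 * 2 ^ (k - 1) := by
      rw [← pow_succ']
      congr 1
      omega
    have hm11 : 1 ≤ m1 := by omega
    have hq'1 : 1 ≤ q' := Nat.one_le_two_pow
    have hq'lt : q' < 2 ^ (k - 1) := Nat.pow_lt_pow_right (by norm_num) (by omega)
    have hglt : g < 2 ^ k := by omega
    have h' : ∀ j < 2 ^ (k - 1),
        regularPF (m1 + j) = regularPF (m1 + (j + q') % 2 ^ (k - 1)) := by
      intro j hj
      have hm1b : m0 ≤ 2 * m1 ∧ 2 * m1 ≤ m0 + 1 := by omega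
      set i := 2 * (m1 + j) - m0 with hidef
      have hiN : i < 2 ^ k := by omega
      have e := hg i hiN
      have hL : m0 + i = 2 * (m1 + j) := by omega
      rcases lt_or_ge (i + g) (2 ^ k) with hw | hw
      · have w1 : (i + g) % 2 ^ k = i + g := Nat.mod_eq_of_lt hw
        have w2 : (j + q') % 2 ^ (k - 1) = j + q' := Nat.mod_eq_of_lt (by omega)
        have hR : m0 + (i + g) % 2 ^ k = 2 * (m1 + (j + q')) := by omega
        rw [hL, hR, PF_even _ (by omega), PF_even _ (by omega)] at e
        rw [w2]
        exact e
      · have hlt2 : i + g < 2 * 2 ^ k := by omega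
        have w1 : (i + g) % 2 ^ k = i + g - 2 ^ k := by
          rw [Nat.mod_eq_sub_mod hw, Nat.mod_eq_of_lt (by omega)]
        have w2 : (j + q') % 2 ^ (k - 1) = j + q' - 2 ^ (k - 1) := by
          rw [Nat.mod_eq_sub_mod (by omega), Nat.mod_eq_of_lt (by omega)]
        have hR : m0 + (i + g) % 2 ^ k = 2 * (m1 + (j + q' - 2 ^ (k - 1))) := by omega
        rw [hL, hR, PF_even _ (by omega), PF_even _ (by omega)] at e
        rw [w2]
        exact e
    exact ih (k - 1) (by omega) (by omega) m1 q' hm11 hq'1 hq'lt h'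

lemma main_aux (k m0 q δ : ℕ) (hk : 2 ≤ k) (hm0 : 1 ≤ m0) (hq1 : 1 ≤ q) (hq2 : q < 2 ^ k)
    (h : ∀ i < 2 ^ k, regularPF (m0 + i) + (m0 + i + δ) % 2 =
        regularPF (m0 + (i + q) % 2 ^ k) + (m0 + (i + q) % 2 ^ k + δ) % 2) : False := by
  have hN : 0 < 2 ^ k := pow_pos (by norm_num) k
  have hN4 : 4 ≤ 2 ^ k := by
    calc (4 : ℕ) = 2 ^ 2 := by norm_num
    _ ≤ 2 ^ k := Nat.pow_le_pow_right (by norm_num) hk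
  have h2N : (2 : ℕ) ∣ 2 ^ k := dvd_pow_self 2 (by omega)
  rcases Nat.even_or_odd q with hqe | hqo
  · obtain ⟨b, hb⟩ := hqe
    apply letters k hk m0 q hm0 hq1 hq2
    intro i hi
    have hp : (i + q) % 2 ^ k % 2 = (i + q) % 2 := Nat.mod_mod_of_dvd _ h2N
    have hH := h i hi
    have hb1 := PF_le_one (m0 + i)
    have hb2 := PF_le_one (m0 + (i + q) % 2 ^ k)
    omega
  · obtain ⟨b, hb⟩ := hqo
    have key : ∀ i < 2 ^ k, regularPF (m0 + i) + (m0 + i + δ) % 2 = 1 := by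
      intro i hi
      have hp : (i + q) % 2 ^ k % 2 = (i + q) % 2 := Nat.mod_mod_of_dvd _ h2N
      have hH := h i hi
      have hb1 := PF_le_one (m0 + i)
      have hb2 := PF_le_one (m0 + (i + q) % 2 ^ k)
      omega
    obtain ⟨s, hs⟩ : ∃ s, m0 + (m0 + 1) % 2 = 2 * s + 1 := ⟨m0 / 2, by omega⟩
    set i0 := (m0 + 1) % 2 with hi0def
    have k1 := key i0 (by omega)
    have k2 := key (i0 + 2) (by omega)
    rw [show m0 + i0 = 2 * s + 1 from hs, PF_odd] at k1
    rw [show m0 + (i0 + 2) = 2 * (s + 1) + 1 by omega, PF_odd] at k2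
    omega


/-- Consider the factor `P_{ℓ+1} ⋯ P_{ℓ+2^n}` of the regular paperfolding word,
split into `2^{n-1}` consecutive blocks of length 2, and let `c i` (for
`0 ≤ i < 2^{n-1}`) be the number of `1`'s in the `(i+1)`-st block. If the
sequence of the `c i` equals its cyclic shift by `q` with `1 ≤ q ≤ 2^{n-1}`,
then `q = 2^{n-1}`. -/
theorem regularPF_block_counts_no_nontrivial_cyclic_shift
    (n ℓ q : ℕ) (hn : 3 ≤ n) (hq1 : 1 ≤ q) (hq2 : q ≤ 2 ^ (n - 1))
    (hshift : ∀ i < 2 ^ (n - 1),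
      regularPF (ℓ + 2 * i + 1) + regularPF (ℓ + 2 * i + 2) =
        regularPF (ℓ + 2 * ((i + q) % 2 ^ (n - 1)) + 1) +
        regularPF (ℓ + 2 * ((i + q) % 2 ^ (n - 1)) + 2)) :
    q = 2 ^ (n - 1) := by
  by_contra hne
  have hqlt : q < 2 ^ (n - 1) := lt_of_le_of_ne hq2 hne
  have hk : 2 ≤ n - 1 := by omega
  rcases Nat.even_or_odd ℓ with ⟨a, ha⟩ | ⟨a, ha⟩
  · -- ℓ = a + a
    have e1 : ∀ j : ℕ, regularPF (ℓ + 2 * j + 1) = (a + j) % 2 := fun j => by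
      rw [show ℓ + 2 * j + 1 = 2 * (a + j) + 1 by omega, PF_odd]
    have e2 : ∀ j : ℕ, regularPF (ℓ + 2 * j + 2) = regularPF (a + 1 + j) := fun j => by
      rw [show ℓ + 2 * j + 2 = 2 * (a + 1 + j) by omega, PF_even _ (by omega)]
    apply main_aux (n - 1) (a + 1) q 1 hk (by omega) hq1 hqlt
    intro i hi
    have hH := hshift i hi
    rw [e1 i, e2 i, e1 ((i + q) % 2 ^ (n - 1)), e2 ((i + q) % 2 ^ (n - 1))] at hH
    omega
  · -- ℓ = 2a + 1
    have e1 : ∀ j : ℕ, regularPF (ℓ + 2 * j + 1) = regularPF (a + 1 + j) := fun j => by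
      rw [show ℓ + 2 * j + 1 = 2 * (a + 1 + j) by omega, PF_even _ (by omega)]
    have e2 : ∀ j : ℕ, regularPF (ℓ + 2 * j + 2) = (a + 1 + j) % 2 := fun j => by
      rw [show ℓ + 2 * j + 2 = 2 * (a + 1 + j) + 1 by omega, PF_odd]
    apply main_aux (n - 1) (a + 1) q 0 hk (by omega) hq1 hqlt
    intro i hi
    have hH := hshift i hi
    rw [e1 i, e2 i, e1 ((i + q) % 2 ^ (n - 1)), e2 ((i + q) % 2 ^ (n - 1))] at hH
    omega
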